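/- Let κ̃ > 0 and Q be real constants and let u⁻ < u⁺ be real numbers with τ = κ̃·(u⁺ − u⁻). If I : ℝ → ℝ is differentiable on [u⁻,u⁺] and satisfies I'(u) + κ̃·I(u) = Q for all u ∈ [u⁻,u⁺], then the average of I over the segment satisfies (1/(u⁺ − u⁻)) ∫_{u⁻}^{u⁺} I(u) du = α·I(u⁻) + (1 − α)·I(u⁺), where α = 1/τ − e^{−τ}/(1 − e^{−τ}). -/

import Mathlib

/-- **Segment-average intensity formula of the method of long characteristics.**
If `I` is differentiable on the characteristic segment `[u⁻, u⁺]` and satisfies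
`I'(u) + κ̃ I(u) = Q` there (constant `κ̃` > 0 and `Q`), then the average of `I`
over the segment is the combination `α I(u⁻) + (1 - α) I(u⁺)` of the incoming and
outgoing intensities, with weight `α = 1/τ - e^{-τ}/(1 - e^{-τ})` where
`τ = κ̃ (u⁺ - u⁻)` is the optical thickness of the segment. -/
theorem characteristic_segment_average
    (κ Q : ℝ) (hκ : 0 < κ) (um up : ℝ) (hu : um < up)
    (I : ℝ → ℝ)
    (hdiff : DifferentiableOn ℝ I (Set.Icc um up))
    (hode : ∀ u ∈ Set.Icc um up, derivWithin I (Set.Icc um up) u + κ * I u = Q) :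
    (1 / (up - um)) * ∫ u in um..up, I u =
      (1 / (κ * (up - um)) -
          Real.exp (-(κ * (up - um))) / (1 - Real.exp (-(κ * (up - um))))) * I um +
      (1 - (1 / (κ * (up - um)) -
          Real.exp (-(κ * (up - um))) / (1 - Real.exp (-(κ * (up - um)))))) * I up := by
  set s := Set.Icc um up with hs
  have hle : um ≤ up := hu.le
  have hd : up - um ≠ 0 := sub_ne_zero.2 hu.ne'
  have hκ' : κ ≠ 0 := hκ.ne'
  set E := Real.exp (-(κ * (up - um))) with hE
  have hE1 : E < 1 := by
    rw [hE]
    have : -(κ * (up - um)) < 0 := by nlinarith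
    calc Real.exp (-(κ * (up - um))) < Real.exp 0 := Real.exp_lt_exp.2 this
      _ = 1 := Real.exp_zero
  have h1E : 1 - E ≠ 0 := sub_ne_zero.2 hE1.ne'
  -- EqOn for derivWithin
  have heq : Set.EqOn (derivWithin I s) (fun u => Q - κ * I u) s := fun u hu => by
    have := hode u hu; simp only; linarith
  have hIcont : ContinuousOn I s := hdiff.continuousOn
  have hdercont : ContinuousOn (derivWithin I s) s :=
    (continuousOn_const.sub (continuousOn_const.mul hIcont)).congr heq
  have hint : IntervalIntegrable (derivWithin I s) MeasureTheory.volume um up := by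
    apply ContinuousOn.intervalIntegrable
    rwa [Set.uIcc_of_le hle]
  -- FTC
  have hftc : ∫ u in um..up, derivWithin I s u = I up - I um := by
    apply intervalIntegral.integral_eq_sub_of_hasDeriv_right_of_le hle hIcont _ hint
    intro x hx
    have hmem : s ∈ nhds x := Icc_mem_nhds hx.1 hx.2
    have hda : HasDerivAt I (derivWithin I s x) x := by
      rw [derivWithin_of_mem_nhds hmem]
      exact (hdiff.differentiableAt hmem).hasDerivAt
    exact hda.hasDerivWithinAt
  have hIint : IntervalIntegrable I MeasureTheory.volume um up := by
    apply ContinuousOn.intervalIntegrable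
    rwa [Set.uIcc_of_le hle]
  -- integrate the ODE
  have hkey : κ * ∫ u in um..up, I u = Q * (up - um) - (I up - I um) := by
    have : ∫ u in um..up, (derivWithin I s u + κ * I u) = Q * (up - um) := by
      have : ∀ u ∈ Set.uIcc um up, derivWithin I s u + κ * I u = Q := by
        intro u hu; exact hode u (by rwa [Set.uIcc_of_le hle] at hu)
      rw [intervalIntegral.integral_congr this, intervalIntegral.integral_const,
        smul_eq_mul, mul_comm]
    rw [intervalIntegral.integral_add hint (hIint.const_mul κ), hftc,
      intervalIntegral.integral_const_mul] at this
    linarith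
  -- explicit relation between I up and I um
  have hsol : I up - Q / κ = E * (I um - Q / κ) := by
    set g : ℝ → ℝ := fun u => Real.exp (κ * u) * (I u - Q / κ) with hg
    have hgdiff : DifferentiableOn ℝ g s := by
      apply DifferentiableOn.mul
      · exact ((differentiable_id.const_mul κ).exp).differentiableOn
      · exact hdiff.sub (differentiableOn_const _)
    have hgderiv : ∀ x ∈ Set.Ico um up, derivWithin g s x = 0 := by
      intro x hx
      have hxs : x ∈ s := Set.Ico_subset_Icc_self hx
      have hU : UniqueDiffWithinAt ℝ s x := (uniqueDiffOn_Icc hu) x hxs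
      have hexp : HasDerivAt (fun u => Real.exp (κ * u)) (κ * Real.exp (κ * x)) x := by
        have := (Real.hasDerivAt_exp (κ * x)).comp x ((hasDerivAt_id x).const_mul κ)
        exact this.congr_deriv (by ring)
      have hI : HasDerivWithinAt I (derivWithin I s x) s x :=
        (hdiff x hxs).hasDerivWithinAt
      have hprod : HasDerivWithinAt g
          (κ * Real.exp (κ * x) * (I x - Q / κ) +
            Real.exp (κ * x) * (derivWithin I s x)) s x := by
        exact hexp.hasDerivWithinAt.mul (hI.sub_const (Q / κ))
      rw [hprod.derivWithin hU]
      have hode' := hode x hxs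
      have : derivWithin I s x = Q - κ * I x := by linarith
      rw [this]
      field_simp
      ring
    have hconst := constant_of_derivWithin_zero hgdiff hgderiv up (Set.right_mem_Icc.2 hle)
    have hgup : Real.exp (κ * up) * (I up - Q / κ) = Real.exp (κ * um) * (I um - Q / κ) :=
      hconst
    have hEeq : E = Real.exp (κ * um) / Real.exp (κ * up) := by
      rw [hE, ← Real.exp_sub]; ring_nf
    rw [hEeq]
    have hpos : Real.exp (κ * up) ≠ 0 := (Real.exp_pos _).ne'
    field_simp at hgup ⊢
    nlinarith [hgup]
  -- algebra
  have hQ : Q * (1 - E) = κ * (I up - E * I um) := by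
    have := hsol
    field_simp at this
    nlinarith [this]
  have hInt : ∫ u in um..up, I u = (Q * (up - um) - (I up - I um)) / κ := by
    field_simp
    linarith [hkey]
  rw [hInt]
  have hQ' : Q = κ * (I up - E * I um) / (1 - E) := by
    field_simp
    nlinarith [hQ]
  rw [hQ']
  field_simp
  ring
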